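/- Let P₁,…,Pₙ be random variables in [0,1] and for each subset u ⊆ {1,…,n} with |u| = n−r+1 let g_u be a measurable function of the coordinates in u such that whenever the parameter θ satisfies θⱼ ∈ Θ₀ⱼ for all j ∈ u, Pr_θ(g_u(P_u) ≤ α) ≤ α for all α. Then f*(P) = max over all such u of g_u(P_u) satisfies: for every θ in the partial conjunction null Θ₀^{r/n} (at most r−1 components are non-null), Pr_θ(f*(P) ≤ α) ≤ α for all α ∈ [0,1]. -/

import Mathlib

open MeasureTheory
open scoped Classical

theorem gbhpc_valid
    {Ω Θ' : Type*} [MeasurableSpace Ω] (n r : ℕ) (hr1 : 1 ≤ r) (hrn : r ≤ n)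
    (Pr : (Fin n → Θ') → Measure Ω) (hprob : ∀ θ, IsProbabilityMeasure (Pr θ))
    (Θ0 : Fin n → Set Θ') (P : Fin n → Ω → ℝ)
    (g : Finset (Fin n) → (Fin n → ℝ) → ℝ)
    (hval : ∀ u : Finset (Fin n), u.card = n - r + 1 →
      ∀ θ : Fin n → Θ', (∀ j ∈ u, θ j ∈ Θ0 j) →
        ∀ α ∈ Set.Icc (0:ℝ) 1,
          Pr θ {ω | g u (fun i => P i ω) ≤ α} ≤ ENNReal.ofReal α) :
    ∀ θ : Fin n → Θ',
      (Finset.univ.filter (fun i => θ i ∉ Θ0 i)).card ≤ r - 1 →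
      ∀ α ∈ Set.Icc (0:ℝ) 1,
        Pr θ {ω | sSup {x : ℝ | ∃ u : Finset (Fin n), u.card = n - r + 1 ∧
          x = g u (fun i => P i ω)} ≤ α} ≤ ENNReal.ofReal α := by
  intro θ hθ α hα
  -- find a subset u of null coordinates with card n - r + 1
  have hsplit := Finset.card_filter_add_card_filter_not
    (s := Finset.univ) (p := fun i => θ i ∈ Θ0 i)
  have hcard : n - r + 1 ≤ (Finset.univ.filter (fun i => θ i ∈ Θ0 i)).card := by
    have hn : (Finset.univ : Finset (Fin n)).card = n := by simp
    omega
  obtain ⟨u, hu_sub, hu_card⟩ :=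
    Finset.exists_subset_card_eq (s := Finset.univ.filter (fun i => θ i ∈ Θ0 i)) (n := n - r + 1) hcard
  have hu_null : ∀ j ∈ u, θ j ∈ Θ0 j := by
    intro j hj
    have := hu_sub hj
    simpa using this
  refine le_trans (measure_mono ?_) (hval u hu_card θ hu_null α hα)
  intro ω hω
  simp only [Set.mem_setOf_eq] at hω ⊢
  refine le_trans ?_ hω
  have hfin : {x : ℝ | ∃ v : Finset (Fin n), v.card = n - r + 1 ∧
      x = g v (fun i => P i ω)}.Finite := by
    have : {x : ℝ | ∃ v : Finset (Fin n), v.card = n - r + 1 ∧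
        x = g v (fun i => P i ω)} ⊆ Set.range (fun v : Finset (Fin n) => g v (fun i => P i ω)) := by
      rintro x ⟨v, _, rfl⟩
      exact ⟨v, rfl⟩
    exact (Set.finite_range _).subset this
  exact le_csSup hfin.bddAbove ⟨u, hu_card, rfl⟩
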